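/- Fix x with ρ_x ∈ (0,1). Let Wᵢ ∈ {0,1} be treatment indicators adapted to a filtration (𝒢_{i−1}) with E[Wᵢ | 𝒢_{i−1}] → ρ_x a.s., and let Ỹᵢ(1), Ỹᵢ(0) be mean-zero, square-integrable, with Ỹᵢ(w) independent of 𝒢_{i−1} given Xᵢ = x and Var(Ỹᵢ(w)) = σ²(x,w). Define ΔQ_{i(1)} = (Wᵢ/ρ_x)·Ỹᵢ(1) and ΔQ_{i(0)} = ((1−Wᵢ)/(1−ρ_x))·Ỹᵢ(0). Then Cov(ΔQ_{i(1)}, ΔQ_{i(0)} | 𝒢_{i−1}) = 0, and (1/n)Σᵢ Var(ΔQ_{i(1)} − ΔQ_{i(0)} | 𝒢_{i−1}) → σ²(x,1)/ρ_x + σ²(x,0)/(1−ρ_x) almost surely. -/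

import Mathlib

open MeasureTheory ProbabilityTheory Filter

/-- Conditional variance computation for the martingale difference array in the
CADBCD proof.  With `ΔQ_{i(1)} = (Wᵢ/ρ)Ỹᵢ(1)` and `ΔQ_{i(0)} = ((1-Wᵢ)/(1-ρ))Ỹᵢ(0)`,
the conditional covariance given `𝒢_{i-1}` vanishes, and the averaged conditional
variances converge a.s. to `σ²(x,1)/ρ + σ²(x,0)/(1-ρ)`. -/
theorem cadbcd_conditional_variance
    {Ω : Type*} [m : MeasurableSpace Ω] (μ : Measure Ω) [IsProbabilityMeasure μ]
    (𝒢 : ℕ → MeasurableSpace Ω) (h𝒢 : ∀ i, 𝒢 i ≤ m)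
    (W : ℕ → Ω → ℝ) (hW01 : ∀ i ω, W i ω = 0 ∨ W i ω = 1)
    (ρ σ1sq σ0sq : ℝ) (hρ : ρ ∈ Set.Ioo (0 : ℝ) 1)
    (hσ1 : 0 ≤ σ1sq) (hσ0 : 0 ≤ σ0sq)
    (Y1 Y0 : ℕ → Ω → ℝ) (hY1 : ∀ i, MemLp (Y1 i) 2 μ) (hY0 : ∀ i, MemLp (Y0 i) 2 μ)
    -- conditional allocation probabilities converge to the target `ρ` a.s.
    (hWcond : ∀ᵐ ω ∂μ,
      Tendsto (fun i => (μ[W (i + 1) | 𝒢 i]) ω) atTop (nhds ρ))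
    -- mean-zero responses, conditionally independent of the past:
    (hmean1 : ∀ i, μ[fun ω => W (i + 1) ω * Y1 (i + 1) ω | 𝒢 i] =ᵐ[μ] 0)
    (hmean0 : ∀ i, μ[fun ω => (1 - W (i + 1) ω) * Y0 (i + 1) ω | 𝒢 i] =ᵐ[μ] 0)
    -- conditional second moments, from `Var(Ỹᵢ(w)) = σ²(x,w)` and independence:
    (hsec1 : ∀ i, μ[fun ω => W (i + 1) ω * (Y1 (i + 1) ω) ^ 2 | 𝒢 i]
      =ᵐ[μ] fun ω => σ1sq * (μ[W (i + 1) | 𝒢 i]) ω)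
    (hsec0 : ∀ i, μ[fun ω => (1 - W (i + 1) ω) * (Y0 (i + 1) ω) ^ 2 | 𝒢 i]
      =ᵐ[μ] fun ω => σ0sq * (1 - (μ[W (i + 1) | 𝒢 i]) ω)) :
    -- conditional covariance of `ΔQ_{i(1)}` and `ΔQ_{i(0)}` vanishes:
    (∀ i, (fun ω =>
        (μ[fun ω' => (W (i + 1) ω' / ρ * Y1 (i + 1) ω') *
            ((1 - W (i + 1) ω') / (1 - ρ) * Y0 (i + 1) ω') | 𝒢 i]) ω -
        (μ[fun ω' => W (i + 1) ω' / ρ * Y1 (i + 1) ω' | 𝒢 i]) ω *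
        (μ[fun ω' => (1 - W (i + 1) ω') / (1 - ρ) * Y0 (i + 1) ω' | 𝒢 i]) ω)
      =ᵐ[μ] 0) ∧
    -- averaged conditional variances converge a.s.:
    (∀ᵐ ω ∂μ, Tendsto (fun n : ℕ => (1 / (n : ℝ)) * ∑ i ∈ Finset.range n,
        ((μ[fun ω' => (W (i + 1) ω' / ρ * Y1 (i + 1) ω' -
            (1 - W (i + 1) ω') / (1 - ρ) * Y0 (i + 1) ω') ^ 2 | 𝒢 i]) ω -
          ((μ[fun ω' => W (i + 1) ω' / ρ * Y1 (i + 1) ω' -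
            (1 - W (i + 1) ω') / (1 - ρ) * Y0 (i + 1) ω' | 𝒢 i]) ω) ^ 2))
      atTop (nhds (σ1sq / ρ + σ0sq / (1 - ρ)))) := by
  obtain ⟨hρ0, hρ1⟩ := hρ
  have h1ρ : (0 : ℝ) < 1 - ρ := by linarith
  -- the first conditional means vanish
  have hm1 : ∀ i, μ[fun ω' => W (i + 1) ω' / ρ * Y1 (i + 1) ω' | 𝒢 i] =ᵐ[μ] 0 := by
    intro i
    have hfun : (fun ω' => W (i + 1) ω' / ρ * Y1 (i + 1) ω')
        = ρ⁻¹ • (fun ω' => W (i + 1) ω' * Y1 (i + 1) ω') := by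
      funext ω'; simp only [Pi.smul_apply, smul_eq_mul]; ring
    rw [hfun]
    refine (condExp_smul ρ⁻¹ _ (𝒢 i)).trans ?_
    filter_upwards [hmean1 i] with ω hω
    simp [hω]
  have hm0 : ∀ i, μ[fun ω' => (1 - W (i + 1) ω') / (1 - ρ) * Y0 (i + 1) ω' | 𝒢 i] =ᵐ[μ] 0 := by
    intro i
    have hfun : (fun ω' => (1 - W (i + 1) ω') / (1 - ρ) * Y0 (i + 1) ω')
        = (1 - ρ)⁻¹ • (fun ω' => (1 - W (i + 1) ω') * Y0 (i + 1) ω') := by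
      funext ω'; simp only [Pi.smul_apply, smul_eq_mul]; ring
    rw [hfun]
    refine (condExp_smul (1 - ρ)⁻¹ _ (𝒢 i)).trans ?_
    filter_upwards [hmean0 i] with ω hω
    simp [hω]
  constructor
  · -- conditional covariance vanishes
    intro i
    have hzero : (fun ω' => (W (i + 1) ω' / ρ * Y1 (i + 1) ω') *
        ((1 - W (i + 1) ω') / (1 - ρ) * Y0 (i + 1) ω')) = (0 : Ω → ℝ) := by
      funext ω'
      rcases hW01 (i + 1) ω' with h | h <;> simp [h]
    rw [hzero, condExp_zero]
    filter_upwards [hm1 i, hm0 i] with ω h1 h0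
    simp [h1, h0]
  · -- averaged conditional variances
    -- eventual integrability of W
    have hex : ∃ i₀ : ℕ, ∀ i, i₀ ≤ i → Integrable (W (i + 1)) μ := by
      by_contra h
      push_neg at h
      obtain ⟨ω, hω⟩ := hWcond.exists
      have hev : ∀ᶠ i in atTop, ρ / 2 < (μ[W (i + 1) | 𝒢 i]) ω :=
        hω.eventually (eventually_gt_nhds (by linarith))
      have hfreq : ∃ᶠ i in atTop, (μ[W (i + 1) | 𝒢 i]) ω = 0 := by
        rw [frequently_atTop]
        intro a
        obtain ⟨i, hi, hni⟩ := h a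
        exact ⟨i, hi, by rw [condExp_of_not_integrable hni]; rfl⟩
      obtain ⟨i, heq, hgt⟩ := (hfreq.and_eventually hev).exists
      rw [heq] at hgt; linarith
    obtain ⟨i₀, hi₀⟩ := hex
    -- key identity for the conditional variance summand, for i ≥ i₀
    have key : ∀ i, i₀ ≤ i →
        (fun ω => (μ[fun ω' => (W (i + 1) ω' / ρ * Y1 (i + 1) ω' -
            (1 - W (i + 1) ω') / (1 - ρ) * Y0 (i + 1) ω') ^ 2 | 𝒢 i]) ω -
          ((μ[fun ω' => W (i + 1) ω' / ρ * Y1 (i + 1) ω' -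
            (1 - W (i + 1) ω') / (1 - ρ) * Y0 (i + 1) ω' | 𝒢 i]) ω) ^ 2)
        =ᵐ[μ] fun ω => σ1sq / ρ ^ 2 * (μ[W (i + 1) | 𝒢 i]) ω
          + σ0sq / (1 - ρ) ^ 2 * (1 - (μ[W (i + 1) | 𝒢 i]) ω) := by
      intro i hi
      have hWi := hi₀ i hi
      have hWae : AEStronglyMeasurable (W (i + 1)) μ := hWi.1
      have hWb : ∀ ω', |W (i + 1) ω'| ≤ 1 := by
        intro ω'; rcases hW01 (i + 1) ω' with h | h <;> simp [h]
      have hW1b : ∀ ω', |1 - W (i + 1) ω'| ≤ 1 := by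
        intro ω'; rcases hW01 (i + 1) ω' with h | h <;> simp [h]
      -- integrability
      have hI1 : Integrable (fun ω' => W (i + 1) ω' * Y1 (i + 1) ω') μ := by
        refine Integrable.mono' ((hY1 (i + 1)).integrable one_le_two).abs
          (hWae.mul (hY1 (i + 1)).1) (Filter.Eventually.of_forall fun ω' => ?_)
        rw [Real.norm_eq_abs, abs_mul]
        calc |W (i + 1) ω'| * |Y1 (i + 1) ω'| ≤ 1 * |Y1 (i + 1) ω'| :=
              mul_le_mul_of_nonneg_right (hWb ω') (abs_nonneg _)
          _ = |Y1 (i + 1) ω'| := one_mul _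
      have hI0 : Integrable (fun ω' => (1 - W (i + 1) ω') * Y0 (i + 1) ω') μ := by
        refine Integrable.mono' ((hY0 (i + 1)).integrable one_le_two).abs
          ((aestronglyMeasurable_const.sub hWae).mul (hY0 (i + 1)).1)
          (Filter.Eventually.of_forall fun ω' => ?_)
        rw [Real.norm_eq_abs, abs_mul]
        calc |1 - W (i + 1) ω'| * |Y0 (i + 1) ω'| ≤ 1 * |Y0 (i + 1) ω'| :=
              mul_le_mul_of_nonneg_right (hW1b ω') (abs_nonneg _)
          _ = |Y0 (i + 1) ω'| := one_mul _
      have hY1sq : AEStronglyMeasurable (fun ω' => (Y1 (i + 1) ω') ^ 2) μ := by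
        exact (hY1 (i + 1)).1.pow 2
      have hY0sq : AEStronglyMeasurable (fun ω' => (Y0 (i + 1) ω') ^ 2) μ := by
        exact (hY0 (i + 1)).1.pow 2
      have hI1sq : Integrable (fun ω' => W (i + 1) ω' * (Y1 (i + 1) ω') ^ 2) μ := by
        refine Integrable.mono' (hY1 (i + 1)).integrable_sq
          (hWae.mul hY1sq)
          (Filter.Eventually.of_forall fun ω' => ?_)
        rw [Real.norm_eq_abs, abs_mul, abs_of_nonneg (sq_nonneg (Y1 (i + 1) ω'))]
        exact mul_le_of_le_one_left (sq_nonneg _) (hWb ω')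
      have hI0sq : Integrable (fun ω' => (1 - W (i + 1) ω') * (Y0 (i + 1) ω') ^ 2) μ := by
        refine Integrable.mono' (hY0 (i + 1)).integrable_sq
          ((aestronglyMeasurable_const.sub hWae).mul hY0sq)
          (Filter.Eventually.of_forall fun ω' => ?_)
        rw [Real.norm_eq_abs, abs_mul, abs_of_nonneg (sq_nonneg (Y0 (i + 1) ω'))]
        exact mul_le_of_le_one_left (sq_nonneg _) (hW1b ω')
      -- the square decomposes pointwise
      have hfun2 : (fun ω' => (W (i + 1) ω' / ρ * Y1 (i + 1) ω' -
            (1 - W (i + 1) ω') / (1 - ρ) * Y0 (i + 1) ω') ^ 2)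
          = (ρ⁻¹ ^ 2) • (fun ω' => W (i + 1) ω' * (Y1 (i + 1) ω') ^ 2 : Ω → ℝ)
            + ((1 - ρ)⁻¹ ^ 2) • (fun ω' => (1 - W (i + 1) ω') * (Y0 (i + 1) ω') ^ 2 : Ω → ℝ) := by
        funext ω'
        simp only [Pi.add_apply, Pi.smul_apply, smul_eq_mul]
        rcases hW01 (i + 1) ω' with h | h <;> rw [h] <;> field_simp <;> ring
      have hS : μ[fun ω' => (W (i + 1) ω' / ρ * Y1 (i + 1) ω' -
            (1 - W (i + 1) ω') / (1 - ρ) * Y0 (i + 1) ω') ^ 2 | 𝒢 i]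
          =ᵐ[μ] fun ω => σ1sq / ρ ^ 2 * (μ[W (i + 1) | 𝒢 i]) ω
            + σ0sq / (1 - ρ) ^ 2 * (1 - (μ[W (i + 1) | 𝒢 i]) ω) := by
        rw [hfun2]
        refine (condExp_add (hI1sq.smul _) (hI0sq.smul _) (𝒢 i)).trans ?_
        have e1 := condExp_smul (m := 𝒢 i) (μ := μ) (ρ⁻¹ ^ 2)
          (fun ω' => W (i + 1) ω' * (Y1 (i + 1) ω') ^ 2)
        have e0 := condExp_smul (m := 𝒢 i) (μ := μ) ((1 - ρ)⁻¹ ^ 2)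
          (fun ω' => (1 - W (i + 1) ω') * (Y0 (i + 1) ω') ^ 2)
        filter_upwards [e1, e0, hsec1 i, hsec0 i] with ω h1 h2 h3 h4
        simp only [Pi.add_apply, Pi.smul_apply, smul_eq_mul] at h1 h2 h3 h4 ⊢
        rw [h1, h2, h3, h4]
        field_simp
      -- the conditional mean vanishes
      have hM : μ[fun ω' => W (i + 1) ω' / ρ * Y1 (i + 1) ω' -
            (1 - W (i + 1) ω') / (1 - ρ) * Y0 (i + 1) ω' | 𝒢 i] =ᵐ[μ] 0 := by
        have hfun : (fun ω' => W (i + 1) ω' / ρ * Y1 (i + 1) ω' -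
              (1 - W (i + 1) ω') / (1 - ρ) * Y0 (i + 1) ω')
            = (fun ω' => W (i + 1) ω' / ρ * Y1 (i + 1) ω')
              - (fun ω' => (1 - W (i + 1) ω') / (1 - ρ) * Y0 (i + 1) ω') := by
          funext ω'; simp
        have hI1' : Integrable (fun ω' => W (i + 1) ω' / ρ * Y1 (i + 1) ω') μ := by
          have : (fun ω' => W (i + 1) ω' / ρ * Y1 (i + 1) ω')
              = fun ω' => ρ⁻¹ * (W (i + 1) ω' * Y1 (i + 1) ω') := by
            funext ω'; ring
          rw [this]; exact hI1.const_mul _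
        have hI0' : Integrable (fun ω' => (1 - W (i + 1) ω') / (1 - ρ) * Y0 (i + 1) ω') μ := by
          have : (fun ω' => (1 - W (i + 1) ω') / (1 - ρ) * Y0 (i + 1) ω')
              = fun ω' => (1 - ρ)⁻¹ * ((1 - W (i + 1) ω') * Y0 (i + 1) ω') := by
            funext ω'; ring
          rw [this]; exact hI0.const_mul _
        rw [hfun]
        refine (condExp_sub hI1' hI0' (𝒢 i)).trans ?_
        filter_upwards [hm1 i, hm0 i] with ω h1 h0
        simp [h1, h0]
      filter_upwards [hS, hM] with ω h1 h2
      rw [h1, h2]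
      simp
    -- upgrade to an a.e. statement over all indices
    have key' : ∀ i : ℕ, ∀ᵐ ω ∂μ, i₀ ≤ i →
        ((μ[fun ω' => (W (i + 1) ω' / ρ * Y1 (i + 1) ω' -
            (1 - W (i + 1) ω') / (1 - ρ) * Y0 (i + 1) ω') ^ 2 | 𝒢 i]) ω -
          ((μ[fun ω' => W (i + 1) ω' / ρ * Y1 (i + 1) ω' -
            (1 - W (i + 1) ω') / (1 - ρ) * Y0 (i + 1) ω' | 𝒢 i]) ω) ^ 2)
        = σ1sq / ρ ^ 2 * (μ[W (i + 1) | 𝒢 i]) ω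
          + σ0sq / (1 - ρ) ^ 2 * (1 - (μ[W (i + 1) | 𝒢 i]) ω) := by
      intro i
      by_cases h : i₀ ≤ i
      · filter_upwards [key i h] with ω hω _; exact hω
      · filter_upwards with ω hc; exact absurd hc h
    filter_upwards [hWcond, ae_all_iff.2 key'] with ω hωc hωk
    -- the summands converge to the limit
    have hlim : Tendsto (fun i => σ1sq / ρ ^ 2 * (μ[W (i + 1) | 𝒢 i]) ω
        + σ0sq / (1 - ρ) ^ 2 * (1 - (μ[W (i + 1) | 𝒢 i]) ω)) atTop
        (nhds (σ1sq / ρ + σ0sq / (1 - ρ))) := by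
      have h : Tendsto (fun i => σ1sq / ρ ^ 2 * (μ[W (i + 1) | 𝒢 i]) ω
          + σ0sq / (1 - ρ) ^ 2 * (1 - (μ[W (i + 1) | 𝒢 i]) ω)) atTop
          (nhds (σ1sq / ρ ^ 2 * ρ + σ0sq / (1 - ρ) ^ 2 * (1 - ρ))) :=
        (tendsto_const_nhds.mul hωc).add
          (tendsto_const_nhds.mul (tendsto_const_nhds.sub hωc))
      have heq : σ1sq / ρ + σ0sq / (1 - ρ)
          = σ1sq / ρ ^ 2 * ρ + σ0sq / (1 - ρ) ^ 2 * (1 - ρ) := by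
        field_simp
      rw [heq]
      exact h
    have hsum : Tendsto (fun i : ℕ =>
        ((μ[fun ω' => (W (i + 1) ω' / ρ * Y1 (i + 1) ω' -
            (1 - W (i + 1) ω') / (1 - ρ) * Y0 (i + 1) ω') ^ 2 | 𝒢 i]) ω -
          ((μ[fun ω' => W (i + 1) ω' / ρ * Y1 (i + 1) ω' -
            (1 - W (i + 1) ω') / (1 - ρ) * Y0 (i + 1) ω' | 𝒢 i]) ω) ^ 2)) atTop
        (nhds (σ1sq / ρ + σ0sq / (1 - ρ))) := by
      refine hlim.congr' ?_
      rw [EventuallyEq, eventually_atTop]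
      exact ⟨i₀, fun i hi => (hωk i hi).symm⟩
    have := hsum.cesaro
    simpa [one_div] using this
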